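/- Let N ≥ 1 and d ≥ 2 be integers and D > 0. Then (1/√(2πd)) ∫_{D²(N+1)}^{dπ²(N+1)} e^{-x/8} (e·x/(4(d−1)))^{d−1} dx ≤ (4/√(2πd))·4^d·e^{-(N+1)D²/16}. -/

import Mathlib

lemma key_ineq (k : ℕ) (hk : 1 ≤ k) (t : ℝ) (ht : 0 < t) :
    (Real.exp 1 * t / k) ^ k ≤ Real.exp t := by
  have hk0 : (0:ℝ) < k := by exact_mod_cast hk
  have hpos : 0 < Real.exp 1 * t / k := by positivity
  rw [show ((Real.exp 1 * t / k) ^ k = Real.exp (k * Real.log (Real.exp 1 * t / k))) from ?_]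
  · apply Real.exp_le_exp.mpr
    have hlog : Real.log (t / k) ≤ t / k - 1 := Real.log_le_sub_one_of_pos (by positivity)
    have : Real.log (Real.exp 1 * t / k) = 1 + Real.log (t / k) := by
      rw [mul_div_assoc, Real.log_mul (Real.exp_ne_zero 1) (by positivity), Real.log_exp]
    rw [this]
    have h2 : (k:ℝ) * (t / k) = t := by field_simp
    nlinarith [hlog, hk0]
  · rw [← Real.log_pow, Real.exp_log (by positivity)]

lemma pointwise (d : ℕ) (hd : 2 ≤ d) (x : ℝ) (hx : 0 < x) :
    Real.exp (-x / 8) * (Real.exp 1 * x / (4 * ((d : ℝ) - 1))) ^ (d - 1)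
      ≤ 4 ^ (d - 1) * Real.exp (-x / 16) := by
  set k := d - 1 with hkdef
  have hk : 1 ≤ k := by omega
  have hdk : ((d:ℝ) - 1) = (k:ℝ) := by
    have : (k:ℕ) + 1 = d := by omega
    push_cast [← this]; ring
  have hk0 : (0:ℝ) < k := by exact_mod_cast hk
  have hkey := key_ineq k hk (x / 16) (by positivity)
  have heq : Real.exp 1 * x / (4 * ((d : ℝ) - 1)) = 4 * (Real.exp 1 * (x/16) / k) := by
    rw [hdk]; field_simp; ring
  rw [heq, mul_pow]
  calc Real.exp (-x / 8) * ((4:ℝ) ^ k * (Real.exp 1 * (x/16) / k) ^ k)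
      ≤ Real.exp (-x / 8) * ((4:ℝ) ^ k * Real.exp (x/16)) := by
        apply mul_le_mul_of_nonneg_left _ (Real.exp_nonneg _)
        exact mul_le_mul_of_nonneg_left hkey (by positivity)
    _ = 4 ^ k * Real.exp (-x / 16) := by
        rw [mul_comm (Real.exp (-x/8)), mul_assoc, ← Real.exp_add]
        ring_nf

lemma int_exp (a b : ℝ) :
    ∫ x in a..b, Real.exp (-x / 16) = 16 * Real.exp (-a / 16) - 16 * Real.exp (-b / 16) := by
  have h : ∀ x ∈ Set.uIcc a b, HasDerivAt (fun y => -16 * Real.exp (-y / 16))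
      (Real.exp (-x / 16)) x := by
    intro x _
    have h1 : HasDerivAt (fun y : ℝ => -y / 16) (-1/16) x := by
      simpa using ((hasDerivAt_id x).neg.div_const 16)
    have h2 := (Real.hasDerivAt_exp (-x/16)).comp x h1
    have h3 := h2.const_mul (-16 : ℝ)
    refine h3.congr_deriv ?_
    ring
  have hint : IntervalIntegrable (fun x => Real.exp (-x / 16)) MeasureTheory.volume a b :=
    (Real.continuous_exp.comp (by continuity)).intervalIntegrable a b
  have := intervalIntegral.integral_eq_sub_of_hasDerivAt h hint
  rw [this]; ring

theorem integral_bound (N d : ℕ) (hN : 1 ≤ N) (hd : 2 ≤ d) (D : ℝ) (hD : 0 < D) :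
    (1 / Real.sqrt (2 * Real.pi * d)) *
      ∫ x in (D ^ 2 * ((N : ℝ) + 1))..((d : ℝ) * Real.pi ^ 2 * ((N : ℝ) + 1)),
        Real.exp (-x / 8) * (Real.exp 1 * x / (4 * ((d : ℝ) - 1))) ^ (d - 1) ≤
    (4 / Real.sqrt (2 * Real.pi * d)) * 4 ^ d * Real.exp (-((N : ℝ) + 1) * D ^ 2 / 16) := by
  set a := D ^ 2 * ((N : ℝ) + 1) with ha
  set b := (d : ℝ) * Real.pi ^ 2 * ((N : ℝ) + 1) with hb
  have hN1 : (0:ℝ) < (N:ℝ) + 1 := by positivity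
  have ha0 : 0 < a := by positivity
  have hb0 : 0 < b := by
    have : (0:ℝ) < (d:ℝ) := by exact_mod_cast Nat.lt_of_lt_of_le (by norm_num) hd
    have := Real.pi_pos
    positivity
  have hc0 : 0 < Real.sqrt (2 * Real.pi * d) := by
    have : (0:ℝ) < (d:ℝ) := by exact_mod_cast Nat.lt_of_lt_of_le (by norm_num) hd
    have := Real.pi_pos
    positivity
  set f : ℝ → ℝ := fun x => Real.exp (-x / 8) * (Real.exp 1 * x / (4 * ((d : ℝ) - 1))) ^ (d - 1)
    with hf
  have hfc : Continuous f := by fun_prop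
  have hRHSe : 0 ≤ Real.exp (-((N : ℝ) + 1) * D ^ 2 / 16) := Real.exp_nonneg _
  by_cases hab : a ≤ b
  · -- main case
    have hmono : ∫ x in a..b, f x ≤ ∫ x in a..b, (4:ℝ) ^ (d-1) * Real.exp (-x / 16) := by
      apply intervalIntegral.integral_mono_on hab (hfc.intervalIntegrable a b)
        ((continuous_const.mul (Real.continuous_exp.comp (by continuity))).intervalIntegrable a b)
      intro x hx
      exact pointwise d hd x (lt_of_lt_of_le ha0 hx.1)
    have hint2 : ∫ x in a..b, (4:ℝ) ^ (d-1) * Real.exp (-x / 16)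
        = (4:ℝ)^(d-1) * (16 * Real.exp (-a / 16) - 16 * Real.exp (-b / 16)) := by
      rw [intervalIntegral.integral_const_mul, int_exp]
    have hbound : ∫ x in a..b, f x ≤ 4 * 4 ^ d * Real.exp (-((N : ℝ) + 1) * D ^ 2 / 16) := by
      have hstep : (4:ℝ)^(d-1) * (16 * Real.exp (-a / 16) - 16 * Real.exp (-b / 16))
          ≤ (4:ℝ)^(d-1) * (16 * Real.exp (-a / 16)) := by
        apply mul_le_mul_of_nonneg_left _ (by positivity)
        nlinarith [Real.exp_nonneg (-b/16)]
      have h4 : (4:ℝ)^(d-1) * 16 = 4 * 4 ^ d := by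
        conv_rhs => rw [show d = (d-1)+1 from by omega]
        rw [pow_succ]; ring
      have hexp : Real.exp (-a / 16) = Real.exp (-((N : ℝ) + 1) * D ^ 2 / 16) := by
        rw [ha]; ring_nf
      calc ∫ x in a..b, f x ≤ (4:ℝ)^(d-1) * (16 * Real.exp (-a / 16)) := by
            rw [hint2] at hmono; linarith
        _ = 4 * 4 ^ d * Real.exp (-((N : ℝ) + 1) * D ^ 2 / 16) := by
            rw [hexp, ← mul_assoc, h4]
    calc (1 / Real.sqrt (2 * Real.pi * d)) * ∫ x in a..b, f x
        ≤ (1 / Real.sqrt (2 * Real.pi * d)) * (4 * 4 ^ d * Real.exp (-((N : ℝ) + 1) * D ^ 2 / 16)) :=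
          mul_le_mul_of_nonneg_left hbound (by positivity)
      _ = (4 / Real.sqrt (2 * Real.pi * d)) * 4 ^ d * Real.exp (-((N : ℝ) + 1) * D ^ 2 / 16) := by
          ring
  · push_neg at hab
    have hneg : ∫ x in a..b, f x ≤ 0 := by
      rw [intervalIntegral.integral_symm]
      simp only [neg_nonpos]
      apply intervalIntegral.integral_nonneg hab.le
      intro x hx
      have hx0 : 0 < x := lt_of_lt_of_le hb0 hx.1
      have : ((d:ℝ) - 1) > 0 := by
        have : (2:ℝ) ≤ (d:ℝ) := by exact_mod_cast hd
        linarith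
      positivity
    have h1 : (1 / Real.sqrt (2 * Real.pi * d)) * ∫ x in a..b, f x ≤ 0 := by
      apply mul_nonpos_of_nonneg_of_nonpos (by positivity) hneg
    have h2 : 0 ≤ (4 / Real.sqrt (2 * Real.pi * d)) * 4 ^ d
        * Real.exp (-((N : ℝ) + 1) * D ^ 2 / 16) := by positivity
    linarith
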